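/- In a simple finite-dimensional regular Lie algebra of rank 1 possessing a nondegenerate symmetric invariant bilinear form, every element is a commutator: for every x ∈ L there exist y, z ∈ L with x = [y, z]. -/

import Mathlib

/-- In a simple finite-dimensional regular Lie algebra of rank 1, possessing a
nondegenerate symmetric invariant bilinear form, every element is a commutator. -/
theorem simple_regular_rank_one_every_element_is_commutator
    (K L : Type*) [Field K] [Infinite K] [LieRing L] [LieAlgebra K L]
    [Module.Finite K L] [LieAlgebra.IsSimple K L]
    (hrk : LieAlgebra.rank K L = 1)
    (hreg : ∀ x : L, x ≠ 0 → LieAlgebra.IsRegular K x)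
    (B : LinearMap.BilinForm K L) (hsymm : B.IsSymm)
    (hinv : ∀ x y z : L, B ⁅x, y⁆ z = B x ⁅y, z⁆)
    (hnd : B.Nondegenerate) :
    ∀ x : L, ∃ y z : L, x = ⁅y, z⁆ := by
  intro x
  rcases eq_or_ne x 0 with rfl | hx
  · exact ⟨0, 0, by simp⟩
  -- the dimension is at least 2
  have hdim : 2 ≤ Module.finrank K L := by
    by_contra h
    push_neg at h
    have h1 : Module.finrank K L ≤ 1 := by omega
    rw [finrank_le_one_iff] at h1
    obtain ⟨v, hv⟩ := h1
    have habel : IsLieAbelian L := by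
      constructor
      intro a b
      obtain ⟨c, hc⟩ := hv a
      obtain ⟨d, hd⟩ := hv b
      rw [← hc, ← hd]
      simp
    exact LieAlgebra.IsSimple.non_abelian K habel
  -- find a nonzero y orthogonal to x
  have hBx : B x ≠ 0 := fun h => hx (hnd.1 x (by simp [h]))
  obtain ⟨y, hyker, hy0⟩ : ∃ y : L, B x y = 0 ∧ y ≠ 0 := by
    have hker : LinearMap.ker (B x) ≠ ⊥ := by
      intro h
      have h1 := LinearMap.finrank_range_add_finrank_ker (B x)
      rw [h, finrank_bot] at h1
      have h2 : Module.finrank K (LinearMap.range (B x)) ≤ Module.finrank K K :=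
        Submodule.finrank_le _
      simp [Module.finrank_self] at h2
      omega
    obtain ⟨y, hy, hy0⟩ := Submodule.exists_mem_ne_zero_of_ne_bot hker
    exact ⟨y, hy, hy0⟩
  have hyreg := hreg y hy0
  rw [LieAlgebra.isRegular_iff_finrank_engel_eq_rank, hrk] at hyreg
  -- the engel subalgebra of y equals the span of y
  have hspan : (Submodule.span K {y} : Submodule K L) ≤ (LieSubalgebra.engel K y).toSubmodule := by
    rw [Submodule.span_singleton_le_iff_mem]
    exact LieSubalgebra.self_mem_engel K y
  have hspanrk : Module.finrank K (Submodule.span K {y} : Submodule K L) = 1 :=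
    finrank_span_singleton hy0
  -- kernel of ad y has dimension 1
  have hkerle : LinearMap.ker (LieAlgebra.ad K L y) ≤
      (LieSubalgebra.engel K y).toSubmodule := by
    intro z hz
    rw [LieSubalgebra.mem_toSubmodule, LieSubalgebra.mem_engel_iff]
    exact ⟨1, by simpa using hz⟩
  have hspanker : (Submodule.span K {y} : Submodule K L) ≤ LinearMap.ker (LieAlgebra.ad K L y) := by
    rw [Submodule.span_singleton_le_iff_mem, LinearMap.mem_ker]
    simp [LieAlgebra.ad_apply]
  have hker1 : Module.finrank K (LinearMap.ker (LieAlgebra.ad K L y)) = 1 := by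
    have he : Module.finrank K (LieSubalgebra.engel K y).toSubmodule = 1 := hyreg
    have h1 := Submodule.finrank_mono hkerle
    have h2 := Submodule.finrank_mono hspanker
    omega
  -- rank-nullity
  have hrn := LinearMap.finrank_range_add_finrank_ker (LieAlgebra.ad K L y)
  -- the orthogonal complement of span y
  have horth : Module.finrank K (B.orthogonal (Submodule.span K {y})) =
      Module.finrank K L - 1 := by
    rw [LinearMap.BilinForm.finrank_orthogonal hnd, hspanrk]
  have hrle : LinearMap.range (LieAlgebra.ad K L y) ≤ B.orthogonal (Submodule.span K {y}) := by
    rintro _ ⟨z, rfl⟩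
    rw [LinearMap.BilinForm.mem_orthogonal_iff]
    intro n hn
    obtain ⟨c, rfl⟩ := Submodule.mem_span_singleton.mp hn
    have : B ⁅y, y⁆ z = 0 := by simp
    rw [hinv] at this
    simp only [LinearMap.BilinForm.IsOrtho, LieAlgebra.ad_apply, map_smul,
      LinearMap.smul_apply, smul_eq_mul, this, mul_zero]
  have hreq : LinearMap.range (LieAlgebra.ad K L y) = B.orthogonal (Submodule.span K {y}) := by
    apply Submodule.eq_of_le_of_finrank_le hrle
    rw [horth]
    omega
  have hxmem : x ∈ B.orthogonal (Submodule.span K {y}) := by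
    rw [LinearMap.BilinForm.mem_orthogonal_iff]
    intro n hn
    obtain ⟨c, rfl⟩ := Submodule.mem_span_singleton.mp hn
    have hyx : B y x = 0 := by simpa using (LinearMap.BilinForm.isSymm_def.mp hsymm y x).trans hyker
    simp [LinearMap.BilinForm.IsOrtho, hyx]
  rw [← hreq] at hxmem
  obtain ⟨z, hz⟩ := hxmem
  exact ⟨y, z, by rw [← hz]; simp [LieAlgebra.ad_apply]⟩
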